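/- Every x ∈ 𝕋 satisfies R_up(x) ≤ limsup_{k→∞} q_{k+1}/q_k (as extended reals in [0,∞]), and there exists a point x ∈ 𝕋 attaining equality; that is, max_{x ∈ 𝕋} R_up(x) = limsup_{k→∞} q_{k+1}/q_k. -/

import Mathlib

open Filter MeasureTheory Set
open scoped ENNReal

noncomputable section

/-- The rotation of the circle `𝕋 = ℝ/ℤ` by the angle `α`. -/
def rotF (α : ℝ) (y : UnitAddCircle) : UnitAddCircle := y + (α : UnitAddCircle)

/-- The Poincaré return time `τ(M)` of a set `M ⊆ 𝕋` under the rotation by `α`. -/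
def retTime (α : ℝ) (M : Set UnitAddCircle) : ℕ :=
  sInf {k : ℕ | 1 ≤ k ∧ ((rotF α)^[k] '' M ∩ M).Nonempty}

/-- The arc `I₁ = [1-α, 1)` of the circle. -/
def I1 (α : ℝ) : Set UnitAddCircle := (fun t : ℝ => (t : UnitAddCircle)) '' Ico (1 - α) 1

/-- The `n`-th cylinder interval `I_{x,n}` of `x` for the Sturmian coding
(`I_{x,0} = 𝕋` by convention). -/
def cyl (α : ℝ) (x : UnitAddCircle) (n : ℕ) : Set UnitAddCircle :=
  {y | ∀ k < n, ((rotF α)^[k] y ∈ I1 α ↔ (rotF α)^[k] x ∈ I1 α)}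

/-- The lower local return rate `R_low(x) = liminf_n τ(I_{x,n})/n`, valued in `[0,∞]`. -/
def Rlow (α : ℝ) (x : UnitAddCircle) : ℝ≥0∞ :=
  liminf (fun n : ℕ => (retTime α (cyl α x n) : ℝ≥0∞) / (n : ℝ≥0∞)) atTop

/-- The upper local return rate `R_up(x) = limsup_n τ(I_{x,n})/n`, valued in `[0,∞]`. -/
def Rup (α : ℝ) (x : UnitAddCircle) : ℝ≥0∞ :=
  limsup (fun n : ℕ => (retTime α (cyl α x n) : ℝ≥0∞) / (n : ℝ≥0∞)) atTop

/-- `rjump α q x k` is the paper's `r_{k-1}(x) = min {n | τ(I_{x,n}) ≥ q_{k-1+1}}`: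
with our indexing, `q (k+1)` is the paper's `q_k`.  In particular `rjump α q x (k+1)`
is the paper's `r_k(x)` for `k ≥ 0`, and `rjump α q x 0` is the paper's `r_{-1}(x) = 0`. -/
def rjump (α : ℝ) (q : ℕ → ℕ) (x : UnitAddCircle) (k : ℕ) : ℕ :=
  sInf {n : ℕ | q (k + 1) ≤ retTime α (cyl α x n)}

namespace St7

/-- circle coercion kills integers -/
lemma coe_add_int (t : ℝ) (e : ℤ) : ((t + e : ℝ) : UnitAddCircle) = (t : ℝ) := by
  have h : ((e : ℝ) : UnitAddCircle) = 0 := by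
    rw [AddCircle.coe_eq_zero_iff]
    exact ⟨e, by simp⟩
  show ((t : ℝ) : UnitAddCircle) + ((e : ℝ) : UnitAddCircle) = (t : ℝ)
  rw [h, add_zero]

lemma coe_sub_int_exists {a b : ℝ} (h : (a : UnitAddCircle) = (b : ℝ)) :
    ∃ e : ℤ, a - b = e := by
  have h0 : ((a - b : ℝ) : UnitAddCircle) = 0 := by
    show ((a : ℝ) : UnitAddCircle) - ((b : ℝ) : UnitAddCircle) = 0
    rw [h, sub_self]
  rw [AddCircle.coe_eq_zero_iff] at h0
  obtain ⟨n, hn⟩ := h0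
  exact ⟨n, by simpa using hn.symm⟩

lemma rotF_iter (α : ℝ) (m : ℕ) (t : ℝ) :
    (rotF α)^[m] (t : UnitAddCircle) = ((t + m * α : ℝ) : UnitAddCircle) := by
  induction m with
  | zero => simp
  | succ n ih =>
    rw [Function.iterate_succ_apply', ih, rotF]
    show ((t + n * α : ℝ) : UnitAddCircle) + ((α : ℝ) : UnitAddCircle) = _
    have : ((t + ↑n * α : ℝ) : UnitAddCircle) + ((α : ℝ) : UnitAddCircle)
        = ((t + ↑n * α + α : ℝ) : UnitAddCircle) := rfl
    rw [this]
    congr 1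
    push_cast
    ring

lemma mem_I1_iff {α : ℝ} (hα0 : 0 < α) (hα1 : α < 1) (t : ℝ) :
    ((t : ℝ) : UnitAddCircle) ∈ I1 α ↔ 1 - α ≤ Int.fract t := by
  constructor
  · rintro ⟨s, hs, hst⟩
    obtain ⟨e, he⟩ := coe_sub_int_exists hst
    have hfs : Int.fract s = s := Int.fract_eq_self.2 ⟨by linarith [hs.1], hs.2⟩
    have : Int.fract s = Int.fract t := by
      have : s = t + e := by linarith
      rw [this, Int.fract_add_intCast]
    rw [← this, hfs]
    exact hs.1
  · intro h
    refine ⟨Int.fract t, ⟨h, Int.fract_lt_one t⟩, ?_⟩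
    have heq : Int.fract t = t + ((-⌊t⌋ : ℤ) : ℝ) := by
      rw [Int.fract]
      push_cast
      ring
    rw [heq]
    exact coe_add_int t (-⌊t⌋)

lemma symbol_iff {α : ℝ} (hα0 : 0 < α) (hα1 : α < 1) (t : ℝ) :
    1 - α ≤ Int.fract t ↔ ⌊t + α⌋ = ⌊t⌋ + 1 := by
  have hf : Int.fract t = t - ⌊t⌋ := rfl
  constructor
  · intro h
    have h1 : ((⌊t⌋ + 1 : ℤ) : ℝ) ≤ t + α := by push_cast; linarith
    have h2 : t + α < (⌊t⌋ + 1 : ℤ) + 1 := by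
      have := Int.lt_floor_add_one t
      push_cast
      linarith
    rw [Int.floor_eq_iff]
    constructor
    · exact_mod_cast h1
    · exact_mod_cast h2
  · intro h
    have : ((⌊t + α⌋ : ℤ) : ℝ) ≤ t + α := Int.floor_le _
    rw [h] at this
    push_cast at this
    linarith

lemma floor_dichotomy {α : ℝ} (hα0 : 0 < α) (hα1 : α < 1) (t : ℝ) :
    ⌊t + α⌋ = ⌊t⌋ ∨ ⌊t + α⌋ = ⌊t⌋ + 1 := by
  have h1 : ⌊t⌋ ≤ ⌊t + α⌋ := Int.floor_le_floor (by linarith)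
  have h2 : ⌊t + α⌋ ≤ ⌊t⌋ + 1 := by
    rw [Int.floor_le_iff]
    push_cast
    have := Int.lt_floor_add_one t
    linarith
  omega

lemma coding_iff_floors {α : ℝ} (hα0 : 0 < α) (hα1 : α < 1) (x y : ℝ)
    (hx : x ∈ Ico (0:ℝ) 1) (hy : y ∈ Ico (0:ℝ) 1) (n : ℕ) :
    (∀ k < n, (1 - α ≤ Int.fract (y + k * α) ↔ 1 - α ≤ Int.fract (x + k * α)))
      ↔ (∀ j < n + 1, ⌊y + j * α⌋ = ⌊x + j * α⌋) := by
  have hx0 : ⌊x⌋ = 0 := Int.floor_eq_zero_iff.2 (by exact ⟨hx.1, hx.2⟩)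
  have hy0 : ⌊y⌋ = 0 := Int.floor_eq_zero_iff.2 (by exact ⟨hy.1, hy.2⟩)
  have hstep : ∀ t : ℝ, ∀ k : ℕ, t + k * α + α = t + (k + 1 : ℕ) * α := by
    intro t k; push_cast; ring
  constructor
  · intro h j
    induction j with
    | zero =>
      intro _
      simpa using hy0.trans hx0.symm
    | succ i ih =>
      intro hi
      have hfl : ⌊y + i * α⌋ = ⌊x + i * α⌋ := ih (by omega)
      have hsym := h i (by omega)
      rw [symbol_iff hα0 hα1, symbol_iff hα0 hα1] at hsym
      rw [hstep y i, hstep x i] at hsym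
      rcases floor_dichotomy hα0 hα1 (y + i * α) with h1 | h1 <;>
          rcases floor_dichotomy hα0 hα1 (x + i * α) with h2 | h2 <;>
          rw [hstep y i] at h1 <;> rw [hstep x i] at h2 <;>
          rw [h1, h2, hfl] at hsym ⊢ <;> omega
  · intro h k hk
    rw [symbol_iff hα0 hα1, symbol_iff hα0 hα1, hstep y k, hstep x k,
      h k (by omega), h (k+1) (by omega)]

/-- left endpoint of the cylinder interval -/
def Lf (α x : ℝ) (n : ℕ) : ℝ :=
  (Finset.range (n+1)).sup' (by simp) (fun j => (⌊x + j * α⌋ : ℝ) - j * α)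

/-- right endpoint of the cylinder interval -/
def Rf (α x : ℝ) (n : ℕ) : ℝ :=
  (Finset.range (n+1)).inf' (by simp) (fun j => (⌊x + j * α⌋ : ℝ) + 1 - j * α)

lemma Lf_le (α x : ℝ) (n : ℕ) : Lf α x n ≤ x := by
  apply Finset.sup'_le
  intro j _
  have := Int.floor_le (x + j * α)
  linarith

lemma lt_Rf (α x : ℝ) (n : ℕ) : x < Rf α x n := by
  rw [Rf, Finset.lt_inf'_iff]
  intro j _
  have := Int.lt_floor_add_one (x + j * α)
  linarith

lemma Lf_nonneg {α x : ℝ} (hx : x ∈ Ico (0:ℝ) 1) (n : ℕ) : 0 ≤ Lf α x n := by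
  have h0 : ⌊x⌋ = 0 := Int.floor_eq_zero_iff.2 (by exact ⟨hx.1, hx.2⟩)
  have : ((fun j : ℕ => (⌊x + j * α⌋ : ℝ) - j * α) 0) ≤ Lf α x n :=
    Finset.le_sup' (fun j : ℕ => (⌊x + j * α⌋ : ℝ) - j * α) (Finset.mem_range.2 (Nat.succ_pos n))
  simpa [h0] using this

lemma Rf_le_one {α x : ℝ} (hx : x ∈ Ico (0:ℝ) 1) (n : ℕ) : Rf α x n ≤ 1 := by
  have h0 : ⌊x⌋ = 0 := Int.floor_eq_zero_iff.2 (by exact ⟨hx.1, hx.2⟩)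
  have : Rf α x n ≤ ((fun j : ℕ => (⌊x + j * α⌋ : ℝ) + 1 - j * α) 0) :=
    Finset.inf'_le (fun j : ℕ => (⌊x + j * α⌋ : ℝ) + 1 - j * α) (Finset.mem_range.2 (Nat.succ_pos n))
  simpa [h0] using this

lemma mem_Ico_iff_floors (α x : ℝ) (n : ℕ) (y : ℝ) :
    (∀ j < n + 1, ⌊y + j * α⌋ = ⌊x + j * α⌋) ↔ (Lf α x n ≤ y ∧ y < Rf α x n) := by
  constructor
  · intro h
    constructor
    · apply Finset.sup'_le
      intro j hj
      have hj' := h j (Finset.mem_range.1 hj)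
      have : ((⌊y + j * α⌋ : ℝ)) ≤ y + j * α := Int.floor_le _
      rw [hj'] at this
      linarith
    · rw [Rf, Finset.lt_inf'_iff]
      intro j hj
      have hj' := h j (Finset.mem_range.1 hj)
      have : y + j * α < (⌊y + j * α⌋ : ℝ) + 1 := Int.lt_floor_add_one _
      rw [hj'] at this
      linarith
  · intro ⟨h1, h2⟩ j hj
    have hL : ((⌊x + j * α⌋ : ℝ) - j * α) ≤ y :=
      le_trans (Finset.le_sup' (fun j : ℕ => (⌊x + j * α⌋ : ℝ) - j * α)
        (Finset.mem_range.2 hj)) h1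
    have hR : y < ((⌊x + j * α⌋ : ℝ) + 1 - j * α) :=
      lt_of_lt_of_le h2 (Finset.inf'_le (fun j : ℕ => (⌊x + j * α⌋ : ℝ) + 1 - j * α)
        (Finset.mem_range.2 hj))
    rw [Int.floor_eq_iff]
    constructor
    · push_cast; linarith
    · push_cast; linarith

lemma exists_rep (y : UnitAddCircle) :
    ∃ t : ℝ, t ∈ Ico (0:ℝ) 1 ∧ ((t : ℝ) : UnitAddCircle) = y := by
  obtain ⟨t, rfl⟩ := QuotientAddGroup.mk_surjective y
  refine ⟨Int.fract t, ⟨Int.fract_nonneg t, Int.fract_lt_one t⟩, ?_⟩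
  have heq : Int.fract t = t + ((-⌊t⌋ : ℤ) : ℝ) := by
    rw [Int.fract]; push_cast; ring
  rw [heq]
  exact coe_add_int t (-⌊t⌋)

lemma cyl_eq {α : ℝ} (hα0 : 0 < α) (hα1 : α < 1) {x : ℝ} (hx : x ∈ Ico (0:ℝ) 1) (n : ℕ) :
    cyl α ((x : ℝ) : UnitAddCircle) n
      = (fun t : ℝ => (t : UnitAddCircle)) '' Ico (Lf α x n) (Rf α x n) := by
  ext y
  constructor
  · intro hy
    obtain ⟨t, ht, rfl⟩ := exists_rep y
    have hcode : ∀ k < n, (1 - α ≤ Int.fract (t + k * α) ↔ 1 - α ≤ Int.fract (x + k * α)) := by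
      intro k hk
      have := hy k hk
      rwa [rotF_iter, rotF_iter, mem_I1_iff hα0 hα1, mem_I1_iff hα0 hα1] at this
    have hfl := (coding_iff_floors hα0 hα1 x t hx ht n).1 hcode
    exact ⟨t, (mem_Ico_iff_floors α x n t).1 hfl, rfl⟩
  · rintro ⟨t, ht, rfl⟩
    have ht01 : t ∈ Ico (0:ℝ) 1 :=
      ⟨le_trans (Lf_nonneg hx n) ht.1, lt_of_lt_of_le ht.2 (Rf_le_one hx n)⟩
    intro k hk
    rw [rotF_iter, rotF_iter, mem_I1_iff hα0 hα1, mem_I1_iff hα0 hα1]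
    exact (coding_iff_floors hα0 hα1 x t hx ht01 n).2
      ((mem_Ico_iff_floors α x n t).2 ht) k hk

lemma inter_iff {α : ℝ} (L R : ℝ) (hLR : L < R) (m : ℕ) :
    ((rotF α)^[m] '' ((fun t : ℝ => (t : UnitAddCircle)) '' Ico L R) ∩
      ((fun t : ℝ => (t : UnitAddCircle)) '' Ico L R)).Nonempty ↔
    ∃ e : ℤ, |(m : ℝ) * α - e| < R - L := by
  constructor
  · rintro ⟨z, ⟨w, ⟨u, hu, rfl⟩, rfl⟩, v, hv, hvz⟩
    rw [rotF_iter] at hvz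
    obtain ⟨e, he⟩ := coe_sub_int_exists hvz
    refine ⟨-e, ?_⟩
    have h1 : (m : ℝ) * α - (-e : ℤ) = v - u := by push_cast; linarith
    rw [h1, abs_lt]
    constructor
    · linarith [hu.2, hv.1]
    · linarith [hu.1, hv.2]
  · rintro ⟨e, he⟩
    rw [abs_lt] at he
    rcases le_or_gt 0 ((m : ℝ) * α - e) with h | h
    · refine ⟨((L + ((m:ℝ) * α - e) : ℝ) : UnitAddCircle),
        ⟨⟨((L:ℝ) : UnitAddCircle), ⟨L, ⟨le_refl L, hLR⟩, rfl⟩, ?_⟩,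
         ⟨L + ((m:ℝ) * α - e), ⟨by linarith, by linarith⟩, rfl⟩⟩⟩
      rw [rotF_iter]
      have h2 : L + (m:ℝ) * α = (L + ((m:ℝ) * α - e)) + e := by ring
      rw [h2, coe_add_int]
    · refine ⟨((L : ℝ) : UnitAddCircle),
        ⟨⟨((L + (e - (m:ℝ) * α) : ℝ) : UnitAddCircle),
          ⟨L + (e - (m:ℝ) * α), ⟨by linarith, by linarith⟩, rfl⟩, ?_⟩,
         ⟨L, ⟨le_refl L, hLR⟩, rfl⟩⟩⟩
      rw [rotF_iter]
      have h2 : L + (e - (m:ℝ) * α) + (m:ℝ) * α = L + e := by ring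
      rw [h2, coe_add_int]

lemma retTime_le_of {α : ℝ} {L R : ℝ} (hLR : L < R) (m : ℕ) (hm : 1 ≤ m)
    (he : ∃ e : ℤ, |(m : ℝ) * α - e| < R - L) :
    retTime α ((fun t : ℝ => (t : UnitAddCircle)) '' Ico L R) ≤ m :=
  Nat.sInf_le ⟨hm, (inter_iff L R hLR m).2 he⟩

lemma retTime_ge_of {α : ℝ} {L R : ℝ} (hLR : L < R) (Q : ℕ)
    (hne : ∃ m₀ : ℕ, 1 ≤ m₀ ∧ ∃ e : ℤ, |(m₀ : ℝ) * α - e| < R - L)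
    (hQ : ∀ (m : ℕ) (e : ℤ), 1 ≤ m → m < Q → R - L ≤ |(m : ℝ) * α - e|) :
    Q ≤ retTime α ((fun t : ℝ => (t : UnitAddCircle)) '' Ico L R) := by
  obtain ⟨m₀, hm₀, he₀⟩ := hne
  have hSne : {k : ℕ | 1 ≤ k ∧ (((rotF α)^[k] '' ((fun t : ℝ => (t : UnitAddCircle)) '' Ico L R)) ∩
      ((fun t : ℝ => (t : UnitAddCircle)) '' Ico L R)).Nonempty}.Nonempty :=
    ⟨m₀, hm₀, (inter_iff L R hLR m₀).2 he₀⟩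
  have hmem := Nat.sInf_mem hSne
  by_contra hcon
  push_neg at hcon
  obtain ⟨e, he⟩ := (inter_iff L R hLR _).1 hmem.2
  exact absurd he (not_lt.2 (hQ _ e hmem.1 hcon))



structure CF where
  α : ℝ
  a : ℕ → ℕ
  p : ℕ → ℕ
  q : ℕ → ℕ
  ha : ∀ k, 1 ≤ a k
  hq0 : q 0 = 0
  hq1 : q 1 = 1
  hq : ∀ k, q (k + 2) = a k * q (k + 1) + q k
  hp0 : p 0 = 1
  hp1 : p 1 = 0
  hp : ∀ k, p (k + 2) = a k * p (k + 1) + p k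
  hcf : ∀ k, 0 < (-1 : ℝ) ^ (k + 1) * ((q k : ℝ) * α - (p k : ℝ))
  hα0 : 0 < α
  hα1 : α < 1

variable (D : CF)

def CF.β (k : ℕ) : ℝ := (-1 : ℝ) ^ (k + 1) * ((D.q k : ℝ) * D.α - D.p k)

lemma CF.βpos (k : ℕ) : 0 < D.β k := D.hcf k

lemma CF.qp_eq (k : ℕ) : (D.q k : ℝ) * D.α - D.p k = (-1 : ℝ) ^ (k + 1) * D.β k := by
  have h : ((-1 : ℝ) ^ (k + 1)) * ((-1 : ℝ) ^ (k + 1)) = 1 := by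
    rw [← pow_add, ← two_mul, pow_mul]; norm_num
  rw [CF.β, ← mul_assoc, h, one_mul]

lemma CF.β0 : D.β 0 = 1 := by simp [CF.β, D.hq0, D.hp0]

lemma CF.β1 : D.β 1 = D.α := by norm_num [CF.β, D.hq1, D.hp1]

lemma CF.βrec (k : ℕ) : D.β (k + 2) = D.β k - (D.a k : ℝ) * D.β (k + 1) := by
  simp only [CF.β, D.hq k, D.hp k]
  push_cast
  rw [pow_succ, pow_succ, pow_succ]
  ring

lemma CF.βlt (k : ℕ) : D.β (k + 1) < D.β k := by
  have h2 := D.βpos (k + 2)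
  rw [D.βrec k] at h2
  have ha : (1 : ℝ) ≤ (D.a k : ℝ) := by exact_mod_cast D.ha k
  nlinarith [D.βpos (k + 1)]

lemma CF.βmono : StrictAnti D.β := strictAnti_nat_of_succ_lt D.βlt

lemma CF.βle (j k : ℕ) (h : j ≤ k) : D.β k ≤ D.β j := D.βmono.antitone h

lemma CF.βlt1 (k : ℕ) (h : 1 ≤ k) : D.β k < 1 := by
  calc D.β k ≤ D.β 1 := D.βle 1 k h
  _ = D.α := D.β1
  _ < 1 := D.hα1

lemma CF.βle1 (k : ℕ) : D.β k ≤ 1 := by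
  rcases Nat.eq_zero_or_pos k with h | h
  · rw [h, D.β0]
  · exact (D.βlt1 k h).le

lemma CF.βsum (k : ℕ) : D.β (k + 1) + D.β (k + 2) ≤ D.β k := by
  have := D.βrec k
  have ha : (1 : ℝ) ≤ (D.a k : ℝ) := by exact_mod_cast D.ha k
  nlinarith [D.βpos (k + 1)]

lemma CF.βhalf (k : ℕ) : D.β (k + 2) ≤ D.β k / 2 := by
  have h := D.βsum k
  have := D.βlt (k + 1)
  linarith

lemma CF.βtendsto : ∀ ε : ℝ, 0 < ε → ∃ j, D.β j < ε := by
  intro ε hε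
  have key : ∀ i : ℕ, D.β (2 * i) ≤ (1 / 2) ^ i := by
    intro i
    induction i with
    | zero => simp [D.β0]
    | succ n ih =>
      have h : D.β (2 * n + 2) ≤ D.β (2 * n) / 2 := D.βhalf (2 * n)
      have : 2 * (n + 1) = 2 * n + 2 := by ring
      rw [this, pow_succ]
      nlinarith
  obtain ⟨n, hn⟩ := exists_pow_lt_of_lt_one hε (by norm_num : (1 : ℝ) / 2 < 1)
  exact ⟨2 * n, lt_of_le_of_lt (key n) hn⟩

lemma CF.q_pos (k : ℕ) : 1 ≤ D.q (k + 1) := by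
  induction k using Nat.strong_induction_on with
  | _ k ih =>
    match k with
    | 0 => rw [D.hq1]
    | (n + 1) =>
      rw [D.hq n]
      have := ih n (by omega)
      have := D.ha n
      nlinarith

lemma CF.q_succ_le (k : ℕ) : D.q (k + 1) ≤ D.q (k + 2) := by
  rw [D.hq k]
  have := D.ha k
  nlinarith

lemma CF.q_mono {i j : ℕ} (hi : 1 ≤ i) (hij : i ≤ j) : D.q i ≤ D.q j := by
  induction j with
  | zero => omega
  | succ n ih =>
    rcases Nat.lt_or_ge i (n + 1) with h | h
    · have h1 : D.q i ≤ D.q n := ih (by omega)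
      rcases Nat.exists_eq_add_of_le (show 1 ≤ n by omega) with ⟨m, hm⟩
      have h2 : D.q (m + 1) ≤ D.q (m + 2) := D.q_succ_le m
      have hm' : n = m + 1 := by omega
      rw [hm'] at h1 ⊢
      exact le_trans h1 h2
    · have : i = n + 1 := by omega
      rw [this]

lemma CF.le_q (k : ℕ) : k ≤ D.q (k + 1) := by
  induction k using Nat.strong_induction_on with
  | _ k ih =>
    match k with
    | 0 => omega
    | 1 => have := D.q_pos 1; omega
    | (n + 2) =>
      have h1 : n + 1 ≤ D.q (n + 2) := ih (n + 1) (by omega)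
      have h2 : 1 ≤ D.q (n + 1) := D.q_pos n
      have h3 : D.q (n + 3) = D.a (n + 1) * D.q (n + 2) + D.q (n + 1) := D.hq (n + 1)
      have := D.ha (n + 1)
      nlinarith

lemma CF.det (k : ℕ) : (D.q (k + 1) : ℤ) * D.p k - D.q k * D.p (k + 1) = (-1) ^ k := by
  induction k with
  | zero => simp [D.hq0, D.hq1, D.hp0, D.hp1]
  | succ n ih =>
    have hq := D.hq n
    have hp := D.hp n
    have hq' : (D.q (n + 2) : ℤ) = D.a n * D.q (n + 1) + D.q n := by rw [hq]; push_cast; ring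
    have hp' : (D.p (n + 2) : ℤ) = D.a n * D.p (n + 1) + D.p n := by rw [hp]; push_cast; ring
    rw [hq', hp', pow_succ]
    linear_combination (-1 : ℤ) * ih

/-- |q_{k+1} α - p_{k+1}| = β (k+1) -/
lemma CF.abs_eq (k : ℕ) : |(D.q k : ℝ) * D.α - D.p k| = D.β k := by
  rw [D.qp_eq k]
  rcases Nat.even_or_odd (k + 1) with h | h
  · rw [h.neg_one_pow, one_mul, abs_of_pos (D.βpos k)]
  · rw [h.neg_one_pow, neg_one_mul, abs_neg, abs_of_pos (D.βpos k)]

/-- Best approximation: for 1 ≤ m < q (k+2), |m α - e| ≥ β (k+1). -/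
lemma CF.best (k : ℕ) (m : ℕ) (e : ℤ) (hm1 : 1 ≤ m) (hm2 : m < D.q (k + 2)) :
    D.β (k + 1) ≤ |(m : ℝ) * D.α - e| := by
  set ε : ℤ := (-1) ^ (k + 1) with hε
  have hdet : (D.q (k + 2) : ℤ) * D.p (k + 1) - D.q (k + 1) * D.p (k + 2) = (-1) ^ (k + 1) :=
    D.det (k + 1)
  have hε2 : ε * ε = 1 := by
    rw [hε, ← pow_add, ← two_mul, pow_mul]; norm_num
  set x : ℤ := ε * ((m : ℤ) * D.p (k + 1) - e * D.q (k + 1)) with hx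
  set y : ℤ := ε * (e * D.q (k + 2) - (m : ℤ) * D.p (k + 2)) with hy
  rw [← hε] at hdet
  have h1 : x * D.q (k + 2) + y * D.q (k + 1) = (m : ℤ) := by
    rw [hx, hy]
    linear_combination (ε * (m : ℤ)) * hdet + (m : ℤ) * hε2
  have h2 : x * D.p (k + 2) + y * D.p (k + 1) = e := by
    rw [hx, hy]
    linear_combination (ε * e) * hdet + e * hε2
  clear hx hy hε
  clear_value x y ε
  have hq2 : (1 : ℤ) ≤ D.q (k + 2) := by exact_mod_cast D.q_pos (k + 1)
  have hq1 : (1 : ℤ) ≤ D.q (k + 1) := by exact_mod_cast D.q_pos k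
  have hm1' : (1 : ℤ) ≤ (m : ℤ) := by exact_mod_cast hm1
  have hm2' : (m : ℤ) < (D.q (k + 2) : ℤ) := by exact_mod_cast hm2
  have hb1 := D.βpos (k + 1)
  have hb2 := D.βpos (k + 2)
  have hblt := D.βlt (k + 1)
  have hr1 : (x : ℝ) * (D.q (k + 2) : ℝ) + (y : ℝ) * (D.q (k + 1) : ℝ) = (m : ℝ) := by
    exact_mod_cast congrArg (fun z : ℤ => (z : ℝ)) h1
  have hr2 : (x : ℝ) * (D.p (k + 2) : ℝ) + (y : ℝ) * (D.p (k + 1) : ℝ) = (e : ℝ) := by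
    exact_mod_cast congrArg (fun z : ℤ => (z : ℝ)) h2
  have e2 : (-1 : ℝ) ^ (k + 2 + 1) = (-1 : ℝ) ^ (k + 1) := by
    rw [pow_succ, pow_succ]; ring
  have e1 : (-1 : ℝ) ^ (k + 1 + 1) = -(-1 : ℝ) ^ (k + 1) := by
    rw [pow_succ]; ring
  have hkey : (m : ℝ) * D.α - e
      = (-1 : ℝ) ^ (k + 1) * ((x : ℝ) * D.β (k + 2) - (y : ℝ) * D.β (k + 1)) := by
    calc (m : ℝ) * D.α - e
        = (x : ℝ) * ((D.q (k + 2) : ℝ) * D.α - D.p (k + 2))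
          + (y : ℝ) * ((D.q (k + 1) : ℝ) * D.α - D.p (k + 1)) := by
          linear_combination hr2 - D.α * hr1
      _ = _ := by rw [D.qp_eq (k + 2), D.qp_eq (k + 1), e2, e1]; ring
  have habs : |(m : ℝ) * D.α - e| = |(y : ℝ) * D.β (k + 1) - (x : ℝ) * D.β (k + 2)| := by
    rw [hkey, abs_mul, abs_pow, abs_neg, abs_one, one_pow, one_mul, abs_sub_comm]
  rw [habs]
  have hblt' : D.β (k + 2) < D.β (k + 1) := D.βlt (k + 1)
  clear habs hkey hr1 hr2 e1 e2 hε2 hdet hblt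
  rcases lt_trichotomy y 0 with hy0 | hy0 | hy0
  · rcases lt_trichotomy x 0 with hx0 | hx0 | hx0
    · exfalso; nlinarith [h1]
    · -- x = 0, y < 0
      have hyr : (y : ℝ) ≤ -1 := by exact_mod_cast (show y ≤ -1 by omega)
      have hxr : (0 : ℝ) ≤ (x : ℝ) := by rw [hx0]; norm_num
      refine le_trans ?_ (neg_le_abs _)
      nlinarith
    · have hyr : (y : ℝ) ≤ -1 := by exact_mod_cast (show y ≤ -1 by omega)
      have hxr : (1 : ℝ) ≤ (x : ℝ) := by exact_mod_cast (show 1 ≤ x by omega)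
      refine le_trans ?_ (neg_le_abs _)
      nlinarith
  · exfalso
    rw [hy0] at h1
    rcases lt_trichotomy x 0 with hx0 | hx0 | hx0
    · nlinarith [h1]
    · rw [hx0] at h1; simp at h1; omega
    · nlinarith [h1]
  · rcases lt_trichotomy x 0 with hx0 | hx0 | hx0
    · have hyr : (1 : ℝ) ≤ (y : ℝ) := by exact_mod_cast (show 1 ≤ y by omega)
      have hxr : (x : ℝ) ≤ -1 := by exact_mod_cast (show x ≤ -1 by omega)
      refine le_trans ?_ (le_abs_self _)
      nlinarith
    · have hyr : (1 : ℝ) ≤ (y : ℝ) := by exact_mod_cast (show 1 ≤ y by omega)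
      have hxr : (x : ℝ) = 0 := by rw [hx0]; norm_num
      refine le_trans ?_ (le_abs_self _)
      nlinarith
    · exfalso; nlinarith [h1]


lemma CF.βeq_of_odd (D : CF) {K : ℕ} (h : Odd K) :
    D.β K = (D.q K : ℝ) * D.α - D.p K := by
  have := D.qp_eq K
  have hpow : (-1 : ℝ) ^ (K + 1) = 1 := Even.neg_one_pow (by
    rcases h with ⟨m, hm⟩; exact ⟨m + 1, by omega⟩)
  rw [hpow, one_mul] at this
  exact this.symm

lemma CF.βeq_of_even (D : CF) {K : ℕ} (h : Even K) :
    D.β K = (D.p K : ℝ) - D.q K * D.α := by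
  have := D.qp_eq K
  have hpow : (-1 : ℝ) ^ (K + 1) = -1 := Odd.neg_one_pow (Even.add_one h)
  rw [hpow, neg_one_mul] at this
  linarith

/-- minimal gap: the cylinder interval has length at least `β (K+1)` when `n < q (K+2)`. -/
lemma CF.gap_ge (D : CF) (x : ℝ) (n K : ℕ) (hnK : n < D.q (K + 2)) :
    D.β (K + 1) ≤ Rf D.α x n - Lf D.α x n := by
  obtain ⟨jL, hjL, hL⟩ := Finset.exists_mem_eq_sup' (by simp : (Finset.range (n+1)).Nonempty)
    (fun j : ℕ => (⌊x + j * D.α⌋ : ℝ) - j * D.α)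
  obtain ⟨jR, hjR, hR⟩ := Finset.exists_mem_eq_inf' (by simp : (Finset.range (n+1)).Nonempty)
    (fun j : ℕ => (⌊x + j * D.α⌋ : ℝ) + 1 - j * D.α)
  have hjL' : jL ≤ n := by have := Finset.mem_range.1 hjL; omega
  have hjR' : jR ≤ n := by have := Finset.mem_range.1 hjR; omega
  have hpos : 0 < Rf D.α x n - Lf D.α x n := by
    have h1 := Lf_le D.α x n
    have h2 := lt_Rf D.α x n
    linarith
  have hLf : Lf D.α x n = (⌊x + jL * D.α⌋ : ℝ) - jL * D.α := hL
  have hRf : Rf D.α x n = (⌊x + jR * D.α⌋ : ℝ) + 1 - jR * D.α := hR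
  rcases Nat.lt_trichotomy jL jR with hj | hj | hj
  · -- jL < jR : R - L = e - m α  with m = jR - jL ≥ 1
    set m : ℕ := jR - jL with hm
    have hm1 : 1 ≤ m := by omega
    have hm2 : m < D.q (K + 2) := by omega
    set e : ℤ := ⌊x + jR * D.α⌋ + 1 - ⌊x + jL * D.α⌋ with he
    have hval : Rf D.α x n - Lf D.α x n = (e : ℝ) - (m : ℝ) * D.α := by
      rw [hLf, hRf, he]
      push_cast [hm, Nat.cast_sub (le_of_lt hj)]
      ring
    have hbest := D.best K m e hm1 hm2
    have hpos' : 0 < (e : ℝ) - (m : ℝ) * D.α := by rw [← hval]; exact hpos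
    calc D.β (K + 1) ≤ |(m : ℝ) * D.α - e| := hbest
      _ = |(e : ℝ) - (m : ℝ) * D.α| := abs_sub_comm _ _
      _ = (e : ℝ) - (m : ℝ) * D.α := abs_of_pos hpos'
      _ = Rf D.α x n - Lf D.α x n := hval.symm
  · -- jL = jR : length is a positive integer
    have : Rf D.α x n - Lf D.α x n = 1 := by
      rw [hLf, hRf, hj]
      ring
    rw [this]
    exact D.βle1 (K + 1)
  · -- jR < jL : R - L = m α - e with m = jL - jR
    set m : ℕ := jL - jR with hm
    have hm1 : 1 ≤ m := by omega
    have hm2 : m < D.q (K + 2) := by omega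
    set e : ℤ := ⌊x + jL * D.α⌋ - ⌊x + jR * D.α⌋ - 1 with he
    have hval : Rf D.α x n - Lf D.α x n = (m : ℝ) * D.α - e := by
      rw [hLf, hRf, he]
      push_cast [hm, Nat.cast_sub (le_of_lt hj)]
      ring
    have hbest := D.best K m e hm1 hm2
    have hpos' : 0 < (m : ℝ) * D.α - e := by rw [← hval]; exact hpos
    calc D.β (K + 1) ≤ |(m : ℝ) * D.α - e| := hbest
      _ = (m : ℝ) * D.α - e := abs_of_pos hpos'
      _ = Rf D.α x n - Lf D.α x n := hval.symm

lemma CF.tau_le (D : CF) {x : ℝ} (hx : x ∈ Ico (0:ℝ) 1) (n K : ℕ) (hnK : n < D.q (K + 2)) :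
    retTime D.α (cyl D.α ((x : ℝ) : UnitAddCircle) n) ≤ D.q (K + 2) := by
  have hLR : Lf D.α x n < Rf D.α x n :=
    lt_of_le_of_lt (Lf_le D.α x n) (lt_Rf D.α x n)
  rw [cyl_eq D.hα0 D.hα1 hx n]
  apply retTime_le_of hLR _ (D.q_pos (K + 1))
  refine ⟨(D.p (K + 2) : ℤ), ?_⟩
  have habs : |(D.q (K + 2) : ℝ) * D.α - ((D.p (K + 2) : ℤ) : ℝ)| = D.β (K + 2) := by
    have := D.abs_eq (K + 2)
    push_cast
    exact this
  rw [habs]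
  calc D.β (K + 2) < D.β (K + 1) := D.βlt (K + 1)
    _ ≤ Rf D.α x n - Lf D.α x n := D.gap_ge x n K hnK

/-- small cylinder: anchored interval forces large return time. -/
lemma CF.cyl_small (D : CF) {x c : ℝ} (hx : x ∈ Ico (0:ℝ) 1) (k N : ℕ)
    (hL : ∃ mL : ℤ, ∃ jL ≤ N, c = (mL : ℝ) - jL * D.α)
    (hR : ∃ mR : ℤ, ∃ jR ≤ N, c + D.β (k + 1) = (mR : ℝ) - jR * D.α)
    (hxc : c ≤ x) (hxc2 : x < c + D.β (k + 1)) :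
    D.q (k + 2) ≤ retTime D.α (cyl D.α ((x : ℝ) : UnitAddCircle) N) := by
  obtain ⟨mL, jL, hjL, hcL⟩ := hL
  obtain ⟨mR, jR, hjR, hcR⟩ := hR
  have hLlow : c ≤ Lf D.α x N := by
    have hterm : ((mL : ℝ) - jL * D.α) ≤ (⌊x + jL * D.α⌋ : ℝ) - jL * D.α := by
      have : (mL : ℝ) ≤ ⌊x + jL * D.α⌋ := by
        exact_mod_cast Int.le_floor.2 (by push_cast; linarith)
      linarith
    calc c = (mL : ℝ) - jL * D.α := hcL
      _ ≤ (⌊x + jL * D.α⌋ : ℝ) - jL * D.α := hterm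
      _ ≤ Lf D.α x N := Finset.le_sup' (fun j : ℕ => (⌊x + j * D.α⌋ : ℝ) - j * D.α)
          (Finset.mem_range.2 (by omega))
  have hRhigh : Rf D.α x N ≤ c + D.β (k + 1) := by
    have hflt : ⌊x + jR * D.α⌋ < mR := Int.floor_lt.2 (by push_cast; linarith)
    have hterm : (⌊x + jR * D.α⌋ : ℝ) + 1 - jR * D.α ≤ (mR : ℝ) - jR * D.α := by
      have : (⌊x + jR * D.α⌋ : ℝ) + 1 ≤ (mR : ℝ) := by exact_mod_cast hflt
      linarith
    calc Rf D.α x N ≤ (⌊x + jR * D.α⌋ : ℝ) + 1 - jR * D.α :=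
        Finset.inf'_le (fun j : ℕ => (⌊x + j * D.α⌋ : ℝ) + 1 - j * D.α)
          (Finset.mem_range.2 (by omega))
      _ ≤ (mR : ℝ) - jR * D.α := hterm
      _ = c + D.β (k + 1) := hcR.symm
  have hLR : Lf D.α x N < Rf D.α x N :=
    lt_of_le_of_lt (Lf_le D.α x N) (lt_Rf D.α x N)
  have hlen : Rf D.α x N - Lf D.α x N ≤ D.β (k + 1) := by linarith
  rw [cyl_eq D.hα0 D.hα1 hx N]
  apply retTime_ge_of hLR
  · -- nonemptiness witness
    obtain ⟨j, hj⟩ := D.βtendsto (Rf D.α x N - Lf D.α x N) (by linarith)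
    refine ⟨D.q (j + 1), D.q_pos j, (D.p (j + 1) : ℤ), ?_⟩
    have habs : |(D.q (j + 1) : ℝ) * D.α - ((D.p (j + 1) : ℤ) : ℝ)| = D.β (j + 1) := by
      have := D.abs_eq (j + 1); push_cast; exact this
    rw [habs]
    calc D.β (j + 1) ≤ D.β j := (D.βlt j).le
      _ < _ := hj
  · intro m e hm1 hm2
    calc Rf D.α x N - Lf D.α x N ≤ D.β (k + 1) := hlen
      _ ≤ |(m : ℝ) * D.α - e| := D.best k m e hm1 hm2

def CF.g (D : CF) (k : ℕ) : ℝ≥0∞ := (D.q (k + 2) : ℝ≥0∞) / (D.q (k + 1) : ℝ≥0∞)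

def CF.Kf (D : CF) (n : ℕ) : ℕ := sInf {K : ℕ | n < D.q (K + 2)}

lemma CF.Kf_ne (D : CF) (n : ℕ) : {K : ℕ | n < D.q (K + 2)}.Nonempty := by
  exact ⟨n, lt_of_lt_of_le (Nat.lt_succ_self n) (D.le_q (n + 1))⟩

lemma CF.Kf_spec (D : CF) (n : ℕ) : n < D.q (D.Kf n + 2) := Nat.sInf_mem (D.Kf_ne n)

lemma CF.Kf_le (D : CF) (n : ℕ) (hn : 1 ≤ n) : D.q (D.Kf n + 1) ≤ n := by
  rcases Nat.eq_zero_or_pos (D.Kf n) with h | h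
  · rw [h, D.hq1]; exact hn
  · obtain ⟨K', hK'⟩ := Nat.exists_eq_add_of_le h
    have hnot : K' ∉ {K : ℕ | n < D.q (K + 2)} := by
      intro hmem
      have hs : D.Kf n ≤ K' := Nat.sInf_le hmem
      omega
    simp only [Set.mem_setOf_eq, not_lt] at hnot
    have : D.Kf n + 1 = K' + 2 := by omega
    rw [this]
    exact hnot

lemma CF.Kf_tendsto (D : CF) : Tendsto D.Kf atTop atTop := by
  rw [tendsto_atTop]
  intro M
  rw [eventually_atTop]
  refine ⟨D.q (M + 1), fun n hn => ?_⟩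
  by_contra hcon
  push_neg at hcon
  have h1 : D.Kf n + 2 ≤ M + 1 := by omega
  have h2 : D.q (D.Kf n + 2) ≤ D.q (M + 1) := D.q_mono (by omega) h1
  have := D.Kf_spec n
  omega

/-- Part 1: the pointwise upper bound. -/
lemma CF.upper (D : CF) (x : UnitAddCircle) :
    limsup (fun n : ℕ => (retTime D.α (cyl D.α x n) : ℝ≥0∞) / (n : ℝ≥0∞)) atTop
      ≤ limsup D.g atTop := by
  obtain ⟨t, ht, rfl⟩ := exists_rep x
  have hev : ∀ᶠ n : ℕ in atTop,
      (retTime D.α (cyl D.α ((t : ℝ) : UnitAddCircle) n) : ℝ≥0∞) / (n : ℝ≥0∞)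
        ≤ D.g (D.Kf n) := by
    rw [eventually_atTop]
    refine ⟨1, fun n hn => ?_⟩
    have h1 : retTime D.α (cyl D.α ((t : ℝ) : UnitAddCircle) n) ≤ D.q (D.Kf n + 2) :=
      D.tau_le ht n (D.Kf n) (D.Kf_spec n)
    have h2 : D.q (D.Kf n + 1) ≤ n := D.Kf_le n hn
    exact ENNReal.div_le_div (by exact_mod_cast Nat.cast_le.2 h1) (by exact_mod_cast Nat.cast_le.2 h2)
  calc limsup (fun n : ℕ => (retTime D.α (cyl D.α ((t : ℝ) : UnitAddCircle) n) : ℝ≥0∞) / (n : ℝ≥0∞)) atTop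
      ≤ limsup (fun n => D.g (D.Kf n)) atTop := Filter.limsup_le_limsup hev
    _ = limsup D.g (Filter.map D.Kf atTop) := Filter.limsup_comp D.g D.Kf atTop
    _ ≤ limsup D.g atTop := Filter.limsup_le_limsup_of_le D.Kf_tendsto

def CF.anch (D : CF) (k b : ℕ) (c : ℝ) : Prop :=
  ∃ m : ℤ, (if Odd k then c else c + D.β (k + 1)) = (m : ℝ) - b * D.α

lemma CF.anch_endpoints (D : CF) {k b : ℕ} {c : ℝ} (h : D.anch k b c) :
    (∃ mL : ℤ, ∃ jL ≤ b + D.q (k + 1), c = (mL : ℝ) - jL * D.α) ∧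
    (∃ mR : ℤ, ∃ jR ≤ b + D.q (k + 1), c + D.β (k + 1) = (mR : ℝ) - jR * D.α) := by
  obtain ⟨m, hm⟩ := h
  rcases Nat.even_or_odd k with hk | hk
  · -- k even : right endpoint anchored at b
    rw [if_neg (by simp [Nat.not_odd_iff_even.2 hk])] at hm
    have hβ : D.β (k + 1) = (D.q (k + 1) : ℝ) * D.α - D.p (k + 1) :=
      D.βeq_of_odd (Even.add_one hk)
    constructor
    · refine ⟨m + D.p (k + 1), b + D.q (k + 1), le_refl _, ?_⟩
      push_cast
      rw [hβ] at hm
      linarith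
    · exact ⟨m, b, by omega, hm⟩
  · -- k odd : left endpoint anchored at b
    rw [if_pos hk] at hm
    have hβ : D.β (k + 1) = (D.p (k + 1) : ℝ) - D.q (k + 1) * D.α := by
      apply D.βeq_of_even
      rcases hk with ⟨j, hj⟩
      exact ⟨j + 1, by omega⟩
    constructor
    · exact ⟨m, b, by omega, hm⟩
    · refine ⟨m + D.p (k + 1), b + D.q (k + 1), le_refl _, ?_⟩
      push_cast
      rw [hβ]
      linarith

lemma CF.anch_step (D : CF) {k b : ℕ} {c : ℝ} (h : D.anch k b c) {k' : ℕ} (hk' : k + 3 ≤ k') :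
    ∃ b' c', b' ≤ b + D.q (k + 3) ∧ D.anch k' b' c' ∧ c ≤ c' ∧
      c' + D.β (k' + 1) < c + D.β (k + 1) := by
  obtain ⟨m, hm⟩ := h
  rcases Nat.even_or_odd k with hk | hk
  · -- k even : c + β (k+1) = m - b α ; k+3 odd
    rw [if_neg (by simp [Nat.not_odd_iff_even.2 hk])] at hm
    have hodd3 : Odd (k + 3) := by
      rcases hk with ⟨j, hj⟩; exact ⟨j + 1, by omega⟩
    have hβ3 : D.β (k + 3) = (D.q (k + 3) : ℝ) * D.α - D.p (k + 3) := D.βeq_of_odd hodd3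
    rcases Nat.even_or_odd k' with hk2 | hk2
    · -- k' even: c' + β(k'+1) = (c + β(k+1)) - β(k+3)
      refine ⟨b + D.q (k + 3), c + D.β (k + 1) - D.β (k + 3) - D.β (k' + 1),
        le_refl _, ⟨m + D.p (k + 3), ?_⟩, ?_, ?_⟩
      · rw [if_neg (by simp [Nat.not_odd_iff_even.2 hk2])]
        push_cast
        rw [hβ3] at *
        linarith [hm]
      · have h1 : D.β (k' + 1) ≤ D.β (k + 4) := D.βle (k + 4) (k' + 1) (by omega)
        have h2 : D.β (k + 3) + D.β (k + 4) ≤ D.β (k + 2) := D.βsum (k + 2)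
        have h3 : D.β (k + 2) ≤ D.β (k + 1) := (D.βlt (k + 1)).le
        linarith
      · have := D.βpos (k + 3)
        linarith
    · -- k' odd: c' = (c + β(k+1)) - β(k+3)
      refine ⟨b + D.q (k + 3), c + D.β (k + 1) - D.β (k + 3),
        le_refl _, ⟨m + D.p (k + 3), ?_⟩, ?_, ?_⟩
      · rw [if_pos hk2]
        push_cast
        rw [hβ3] at *
        linarith [hm]
      · have h3 : D.β (k + 3) ≤ D.β (k + 1) := D.βle (k + 1) (k + 3) (by omega)
        linarith
      · have h1 : D.β (k' + 1) < D.β (k + 3) := D.βmono (by omega)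
        linarith
  · -- k odd : c = m - b α ; k+3 even
    rw [if_pos hk] at hm
    have heven3 : Even (k + 3) := by
      rcases hk with ⟨j, hj⟩; exact ⟨j + 2, by omega⟩
    have hβ3 : D.β (k + 3) = (D.p (k + 3) : ℝ) - D.q (k + 3) * D.α := D.βeq_of_even heven3
    rcases Nat.even_or_odd k' with hk2 | hk2
    · -- k' even : c' + β(k'+1) = c + β(k+3)
      refine ⟨b + D.q (k + 3), c + D.β (k + 3) - D.β (k' + 1),
        le_refl _, ⟨m + D.p (k + 3), ?_⟩, ?_, ?_⟩
      · rw [if_neg (by simp [Nat.not_odd_iff_even.2 hk2])]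
        push_cast
        rw [hβ3] at *
        linarith [hm]
      · have h1 : D.β (k' + 1) ≤ D.β (k + 3) := D.βle (k + 3) (k' + 1) (by omega)
        linarith
      · have h1 : D.β (k + 3) < D.β (k + 1) := D.βmono (by omega)
        linarith
    · -- k' odd : c' = c
      refine ⟨b, c, by omega, ⟨m, ?_⟩, le_refl _, ?_⟩
      · rw [if_pos hk2]
        exact hm
      · have h1 : D.β (k' + 1) < D.β (k + 1) := D.βmono (by omega)
        linarith

lemma CF.qcast_ne_zero (D : CF) (k : ℕ) : ((D.q (k + 1) : ℝ≥0∞)) ≠ 0 := by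
  have h : D.q (k + 1) ≠ 0 := by have := D.q_pos k; omega
  exact_mod_cast Nat.cast_ne_zero.2 h

lemma CF.g_ge_one (D : CF) (k : ℕ) : (1 : ℝ≥0∞) ≤ D.g k := by
  rw [CF.g, ENNReal.le_div_iff_mul_le (Or.inl (D.qcast_ne_zero k))
    (Or.inl (ENNReal.natCast_ne_top _)), one_mul]
  exact_mod_cast D.q_succ_le k

lemma CF.exists_k (D : CF) (u : ℝ≥0∞) (hu : u < limsup D.g atTop) (M : ℕ) :
    ∃ k', M ≤ k' ∧ u < D.g k' := by
  have hfreq : ∃ᶠ k in atTop, u < D.g k := Filter.frequently_lt_of_lt_limsup (by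
    isBoundedDefault) hu
  obtain ⟨k', hk', hgt⟩ := Filter.frequently_atTop.1 hfreq M
  exact ⟨k', hk', hgt⟩

lemma factor_tendsto : Tendsto (fun i : ℕ => (i : ℝ≥0∞) / ((i : ℝ≥0∞) + 1)) atTop (nhds 1) := by
  have h : ∀ i : ℕ, (i : ℝ≥0∞) / ((i : ℝ≥0∞) + 1) = ENNReal.ofReal ((i : ℝ) / ((i : ℝ) + 1)) := by
    intro i
    rw [ENNReal.ofReal_div_of_pos (by positivity),
      ENNReal.ofReal_add (Nat.cast_nonneg i) zero_le_one, ENNReal.ofReal_natCast,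
      ENNReal.ofReal_one]
  simp only [h]
  have h2 := ENNReal.tendsto_ofReal (tendsto_natCast_div_add_atTop (1 : ℝ))
  simpa using h2

structure StP (D : CF) where
  k : ℕ
  b : ℕ
  c : ℝ
  hanch : D.anch k b c
  hk1 : 1 ≤ k

def CF.Rel (D : CF) (i : ℕ) (u : ℝ≥0∞) (s t : StP D) : Prop :=
  s.k + 3 ≤ t.k ∧ t.b ≤ s.b + D.q (s.k + 3) ∧ s.c ≤ t.c ∧
  t.c + D.β (t.k + 1) < s.c + D.β (s.k + 1) ∧ u < D.g t.k ∧ i * t.b ≤ D.q (t.k + 1)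

lemma CF.exNext (D : CF) (i : ℕ) (u : ℝ≥0∞) (hu : u < limsup D.g atTop) (s : StP D) :
    ∃ t : StP D, D.Rel i u s t := by
  obtain ⟨k', hk'M, hk'g⟩ := D.exists_k u hu (max (s.k + 3) (i * (s.b + D.q (s.k + 3))))
  obtain ⟨b', c', hb', hanch', hcc', hrr'⟩ :=
    D.anch_step s.hanch (k' := k') (le_trans (le_max_left _ _) hk'M)
  refine ⟨⟨k', b', c', hanch', by have := le_trans (le_max_left _ _) hk'M; omega⟩,
    le_trans (le_max_left _ _) hk'M, hb', hcc', hrr', hk'g, ?_⟩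
  show i * b' ≤ D.q (k' + 1)
  have h1 : i * b' ≤ i * (s.b + D.q (s.k + 3)) := Nat.mul_le_mul_left i hb'
  have h2 : i * (s.b + D.q (s.k + 3)) ≤ k' := le_trans (le_max_right _ _) hk'M
  have h3 : k' ≤ D.q (k' + 1) := D.le_q k'
  omega

def CF.seqSt (D : CF) (u : ℕ → ℝ≥0∞) (hu : ∀ i, u i < limsup D.g atTop) : ℕ → StP D
  | 0 => ⟨1, 0, 0, ⟨0, by rw [if_pos odd_one]; push_cast; ring⟩, le_refl 1⟩
  | (i + 1) => Classical.choose (D.exNext (i + 1) (u (i + 1)) (hu (i + 1)) (D.seqSt u hu i))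

lemma CF.seqSt_spec (D : CF) (u : ℕ → ℝ≥0∞) (hu : ∀ i, u i < limsup D.g atTop) (i : ℕ) :
    D.Rel (i + 1) (u (i + 1)) (D.seqSt u hu i) (D.seqSt u hu (i + 1)) :=
  Classical.choose_spec (D.exNext (i + 1) (u (i + 1)) (hu (i + 1)) (D.seqSt u hu i))

/-- Part 2: existence of a point attaining the limsup. -/
lemma CF.lower (D : CF) (u : ℕ → ℝ≥0∞) (hu : ∀ i, u i < limsup D.g atTop)
    (hten : Tendsto u atTop (nhds (limsup D.g atTop))) :
    ∃ x : UnitAddCircle,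
      limsup D.g atTop
        ≤ limsup (fun n : ℕ => (retTime D.α (cyl D.α x n) : ℝ≥0∞) / (n : ℝ≥0∞)) atTop := by
  set L := limsup D.g atTop with hLdef
  set s := D.seqSt u hu with hsdef
  have hrel : ∀ i, D.Rel (i + 1) (u (i + 1)) (s i) (s (i + 1)) := D.seqSt_spec u hu
  have hcmono : Monotone (fun i => (s i).c) :=
    monotone_nat_of_le_succ (fun i => (hrel i).2.2.1)
  have hrant : Antitone (fun i => (s i).c + D.β ((s i).k + 1)) :=
    antitone_nat_of_succ_le (fun i => ((hrel i).2.2.2.1).le)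
  have hcr : ∀ i, (s i).c < (s i).c + D.β ((s i).k + 1) :=
    fun i => lt_add_of_pos_right _ (D.βpos _)
  have hbdd : BddAbove (Set.range fun i => (s i).c) := by
    refine ⟨(s 0).c + D.β ((s 0).k + 1), ?_⟩
    rintro _ ⟨i, rfl⟩
    exact le_of_lt (lt_of_lt_of_le (hcr i) (hrant (Nat.zero_le i)))
  set x := ⨆ i, (s i).c with hxdef
  have hxi : ∀ i, (s i).c ≤ x := fun i => le_ciSup hbdd i
  have hxr : ∀ i, x < (s i).c + D.β ((s i).k + 1) := by
    intro i
    have hle : x ≤ (s (i + 1)).c + D.β ((s (i + 1)).k + 1) := by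
      apply ciSup_le
      intro t
      rcases le_total t (i + 1) with h | h
      · exact le_of_lt (lt_of_le_of_lt (hcmono h) (hcr (i + 1)))
      · exact le_of_lt (lt_of_lt_of_le (hcr t) (hrant h))
    exact lt_of_le_of_lt hle ((hrel i).2.2.2.1)
  have hc0 : (s 0).c = 0 := rfl
  have hk0 : (s 0).k = 1 := rfl
  have hx0 : (0 : ℝ) ≤ x := by rw [← hc0]; exact hxi 0
  have hx1 : x < 1 := by
    have h := hxr 0
    rw [hc0, hk0, zero_add] at h
    exact lt_of_lt_of_le h (D.βle1 2)
  set N := fun i => (s i).b + D.q ((s i).k + 1) with hNdef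
  have hτ : ∀ i, D.q ((s i).k + 2)
      ≤ retTime D.α (cyl D.α ((x : ℝ) : UnitAddCircle) (N i)) := by
    intro i
    obtain ⟨hLa, hRa⟩ := D.anch_endpoints (s i).hanch
    exact D.cyl_small ⟨hx0, hx1⟩ (s i).k (N i) hLa hRa (hxi i) (hxr i)
  have hkge : ∀ i, i ≤ (s i).k := by
    intro i
    induction i with
    | zero => omega
    | succ n ih => have := (hrel n).1; omega
  have hNge : ∀ i, i ≤ N i := by
    intro i
    calc i ≤ (s i).k := hkge i
      _ ≤ D.q ((s i).k + 1) := D.le_q _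
      _ ≤ N i := Nat.le_add_left _ _
  have hNtend : Tendsto N atTop atTop := tendsto_atTop_mono hNge tendsto_id
  set f := fun n : ℕ => (retTime D.α (cyl D.α ((x : ℝ) : UnitAddCircle) n) : ℝ≥0∞) / (n : ℝ≥0∞)
    with hfdef
  have hw : ∀ i : ℕ, 1 ≤ i → u i * ((i : ℝ≥0∞) / ((i : ℝ≥0∞) + 1)) ≤ f (N i) := by
    intro i hi
    obtain ⟨j, rfl⟩ : ∃ j, i = j + 1 := ⟨i - 1, by omega⟩
    set i := j + 1
    have hui : u i ≤ D.g ((s i).k) := ((hrel j).2.2.2.2.1).le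
    have hbi : i * (s i).b ≤ D.q ((s i).k + 1) := (hrel j).2.2.2.2.2
    set k := (s i).k with hkdef
    have hicast : ((i : ℝ≥0∞)) ≠ 0 := by exact Nat.cast_ne_zero.2 (Nat.succ_ne_zero j)
    have step1 : u i * ((i : ℝ≥0∞) / ((i : ℝ≥0∞) + 1))
        ≤ D.g k * ((i : ℝ≥0∞) / ((i : ℝ≥0∞) + 1)) := mul_le_mul_left hui _
    have step2 : D.g k * ((i : ℝ≥0∞) / ((i : ℝ≥0∞) + 1))
        = ((D.q (k + 2) : ℝ≥0∞) * (i : ℝ≥0∞))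
          / ((D.q (k + 1) : ℝ≥0∞) * ((i : ℝ≥0∞) + 1)) := by
      rw [CF.g, div_eq_mul_inv, div_eq_mul_inv, div_eq_mul_inv,
        ENNReal.mul_inv (Or.inl (D.qcast_ne_zero k)) (Or.inl (ENNReal.natCast_ne_top _))]
      ring
    have hnatineq : (N i) * i ≤ D.q (k + 1) * (i + 1) := by
      have : i * N i = i * (s i).b + i * D.q (k + 1) := by rw [hNdef]; ring
      nlinarith [hbi]
    have hcastineq : ((N i : ℝ≥0∞)) * (i : ℝ≥0∞) ≤ (D.q (k + 1) : ℝ≥0∞) * ((i : ℝ≥0∞) + 1) := by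
      have h1 : ((N i * i : ℕ) : ℝ≥0∞) ≤ ((D.q (k + 1) * (i + 1) : ℕ) : ℝ≥0∞) := by
        exact_mod_cast Nat.cast_le.2 hnatineq
      push_cast at h1
      convert h1 using 2 <;> push_cast <;> ring
    have step3 : ((D.q (k + 2) : ℝ≥0∞) * (i : ℝ≥0∞))
          / ((D.q (k + 1) : ℝ≥0∞) * ((i : ℝ≥0∞) + 1))
        ≤ ((D.q (k + 2) : ℝ≥0∞) * (i : ℝ≥0∞)) / ((N i : ℝ≥0∞) * (i : ℝ≥0∞)) :=
      ENNReal.div_le_div (le_refl _) hcastineq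
    have step4 : ((D.q (k + 2) : ℝ≥0∞) * (i : ℝ≥0∞)) / ((N i : ℝ≥0∞) * (i : ℝ≥0∞))
        = (D.q (k + 2) : ℝ≥0∞) / (N i : ℝ≥0∞) :=
      ENNReal.mul_div_mul_right _ _ hicast (ENNReal.natCast_ne_top i)
    have step5 : (D.q (k + 2) : ℝ≥0∞) / (N i : ℝ≥0∞) ≤ f (N i) := by
      rw [hfdef]
      exact ENNReal.div_le_div (by exact_mod_cast Nat.cast_le.2 (hτ i)) (le_refl _)
    calc u i * ((i : ℝ≥0∞) / ((i : ℝ≥0∞) + 1)) ≤ _ := step1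
      _ = _ := step2
      _ ≤ _ := step3
      _ = _ := step4
      _ ≤ _ := step5
  refine ⟨((x : ℝ) : UnitAddCircle), ?_⟩
  have h1 : limsup (f ∘ N) atTop ≤ limsup f atTop := by
    rw [Filter.limsup_comp f N atTop]
    exact Filter.limsup_le_limsup_of_le hNtend
  have hwt : Tendsto (fun i : ℕ => u i * ((i : ℝ≥0∞) / ((i : ℝ≥0∞) + 1))) atTop (nhds L) := by
    have := ENNReal.Tendsto.mul hten (Or.inr (by simp)) factor_tendsto (Or.inl one_ne_zero)
    simpa using this
  have h2 : L ≤ liminf (f ∘ N) atTop := by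
    calc L = liminf (fun i : ℕ => u i * ((i : ℝ≥0∞) / ((i : ℝ≥0∞) + 1))) atTop :=
        (hwt.liminf_eq).symm
      _ ≤ liminf (f ∘ N) atTop :=
        Filter.liminf_le_liminf (by rw [eventually_atTop]; exact ⟨1, fun i hi => hw i hi⟩)
  calc L ≤ liminf (f ∘ N) atTop := h2
    _ ≤ limsup (f ∘ N) atTop := Filter.liminf_le_limsup
    _ ≤ limsup f atTop := h1

lemma CF.exists_u (D : CF) :
    ∃ u : ℕ → ℝ≥0∞, (∀ i, u i < limsup D.g atTop) ∧
      Tendsto u atTop (nhds (limsup D.g atTop)) := by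
  have hL1 : 1 ≤ limsup D.g atTop :=
    le_limsup_of_frequently_le (Filter.Frequently.of_forall (fun k => D.g_ge_one k))
  rcases eq_top_or_lt_top (limsup D.g atTop) with hT | hT
  · exact ⟨fun i => (i : ℝ≥0∞), fun i => hT ▸ ENNReal.natCast_lt_top i,
      hT ▸ ENNReal.tendsto_nat_nhds_top⟩
  · refine ⟨fun i => limsup D.g atTop * ((i : ℝ≥0∞) / ((i : ℝ≥0∞) + 1)), ?_, ?_⟩
    · intro i
      have hden : ((i : ℝ≥0∞) + 1) ≠ 0 := by
        simp
      have hF1 : ((i : ℝ≥0∞) / ((i : ℝ≥0∞) + 1)) < 1 := by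
        rw [ENNReal.div_lt_iff (Or.inl hden) (Or.inr (ENNReal.natCast_ne_top i)), one_mul]
        exact ENNReal.lt_add_right (ENNReal.natCast_ne_top i) one_ne_zero
      have hL0 : limsup D.g atTop ≠ 0 := by
        intro h
        rw [h] at hL1
        simp at hL1
      calc limsup D.g atTop * ((i : ℝ≥0∞) / ((i : ℝ≥0∞) + 1))
          < limsup D.g atTop * 1 := (ENNReal.mul_lt_mul_iff_right hL0 hT.ne).2 hF1
        _ = limsup D.g atTop := mul_one _
    · have := ENNReal.Tendsto.const_mul (a := limsup D.g atTop) factor_tendsto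
        (Or.inl one_ne_zero)
      simpa using this

end St7

/-- Every `x ∈ 𝕋` satisfies
`R_up(x) ≤ limsup_{k→∞} q_{k+1} / q_k` (as extended reals in `[0,∞]`), and some
`x ∈ 𝕋` attains equality; that is, `max_x R_up(x) = limsup_{k→∞} q_{k+1} / q_k`.
With our indexing the paper's `q_k`, `q_{k+1}` are `q (k+1)`, `q (k+2)`. -/
theorem statement7
    (α : ℝ) (hα : α ∈ Set.Ioo (0 : ℝ) 1) (hirr : Irrational α)
    (a p q : ℕ → ℕ) (ha : ∀ k, 1 ≤ a k)
    -- `a k`, `p (k+1)`, `q (k+1)` are the paper's `a_{k+1}`, `p_k`, `q_k`;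
    -- `p 0`, `q 0` are the paper's `p_{-1} = 1`, `q_{-1} = 0`.
    (hq0 : q 0 = 0) (hq1 : q 1 = 1) (hq : ∀ k, q (k + 2) = a k * q (k + 1) + q k)
    (hp0 : p 0 = 1) (hp1 : p 1 = 0) (hp : ∀ k, p (k + 2) = a k * p (k + 1) + p k)
    -- `a` is the continued fraction expansion of `α`:
    -- the paper's `η_k = (-1)^k (q_k α - p_k)` is positive for all `k ≥ -1`.
    (hcf : ∀ k, 0 < (-1 : ℝ) ^ (k + 1) * ((q k : ℝ) * α - (p k : ℝ)))
    :
    (∀ x : UnitAddCircle,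
      Rup α x ≤ limsup (fun k : ℕ => (q (k + 2) : ℝ≥0∞) / (q (k + 1) : ℝ≥0∞)) atTop) ∧
    (∃ x : UnitAddCircle,
      Rup α x = limsup (fun k : ℕ => (q (k + 2) : ℝ≥0∞) / (q (k + 1) : ℝ≥0∞)) atTop) := by
  obtain ⟨hα0, hα1⟩ := hα
  set D : St7.CF := ⟨α, a, p, q, ha, hq0, hq1, hq, hp0, hp1, hp, hcf, hα0, hα1⟩ with hD
  constructor
  · intro x
    exact D.upper x
  · obtain ⟨u, hu, hten⟩ := D.exists_u
    obtain ⟨x, hx⟩ := D.lower u hu hten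
    exact ⟨x, le_antisymm (D.upper x) hx⟩
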